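/- arXiv:2008.13203 — 2 statements merged into one kernel-verified Lean document; each statement's English description precedes it below -/
import Mathlib

section
/- Let S be an association scheme with thin thin residue, i.e. O^ϑ(S) ⊆ O_ϑ(S). Then S is a p-transitive scheme if and only if S = ⟨S_{p'}⟩, where S_{p'} = {R_i ∈ S : p ∤ k_i}. -/
open scoped Classical

/-- An association scheme of class `d` on a nonempty finite set `X`:
a partition of `X × X` into nonempty relations `r 0, …, r d` with
`r 0` the diagonal, closed under converse (`star`), and with
intersection numbers `pNum i j k`. -/
structure AssocScheme (X : Type*) [Fintype X] [Nonempty X] (d : ℕ) where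
  r : Fin (d + 1) → Set (X × X)
  r_nonempty : ∀ i, (r i).Nonempty
  existsUnique_rel : ∀ q : X × X, ∃! i, q ∈ r i
  r_zero : r 0 = {q : X × X | q.1 = q.2}
  star : Fin (d + 1) → Fin (d + 1)
  mem_star : ∀ (i : Fin (d + 1)) (q : X × X), q ∈ r (star i) ↔ (q.2, q.1) ∈ r i
  pNum : Fin (d + 1) → Fin (d + 1) → Fin (d + 1) → ℕ
  ncard_eq : ∀ (i j k : Fin (d + 1)), ∀ q ∈ r k,
    {z : X | (q.1, z) ∈ r i ∧ (z, q.2) ∈ r j}.ncard = pNum i j k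

namespace AssocScheme

variable {X : Type*} [Fintype X] [Nonempty X] {d : ℕ}

/-- The valency `k_i = p_{i i*}^0` of the relation `R_i`. -/
def val (S : AssocScheme X d) (i : Fin (d + 1)) : ℕ := S.pNum i (S.star i) 0

/-- The complex product `UV = {R_k : p_{uv}^k > 0 for some R_u ∈ U, R_v ∈ V}`. -/
def cmul (S : AssocScheme X d) (U V : Set (Fin (d + 1))) : Set (Fin (d + 1)) :=
  {k | ∃ u ∈ U, ∃ v ∈ V, 0 < S.pNum u v k}

/-- A nonempty subset `T` is closed if `T*T ⊆ T`. -/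
def IsClosedSubset (S : AssocScheme X d) (T : Set (Fin (d + 1))) : Prop :=
  T.Nonempty ∧ S.cmul (S.star '' T) T ⊆ T

/-- The thin radical `O_ϑ(S) = {R_i : k_i = 1}`. -/
def thinRadical (S : AssocScheme X d) : Set (Fin (d + 1)) := {i | S.val i = 1}

/-- A closed subset `T` is strongly normal if `R_{i*} T R_i ⊆ T` for all `i`. -/
def IsStronglyNormal (S : AssocScheme X d) (T : Set (Fin (d + 1))) : Prop :=
  S.IsClosedSubset T ∧ ∀ i : Fin (d + 1), S.cmul (S.cmul {S.star i} T) {i} ⊆ T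

/-- The thin residue `O^ϑ(S)`: the intersection of all strongly normal closed subsets. -/
def thinResidue (S : AssocScheme X d) : Set (Fin (d + 1)) :=
  ⋂₀ {T | S.IsStronglyNormal T}

/-- `⟨H⟩`: the intersection of all closed subsets containing `H`. -/
def closure (S : AssocScheme X d) (H : Set (Fin (d + 1))) : Set (Fin (d + 1)) :=
  ⋂₀ {T | S.IsClosedSubset T ∧ H ⊆ T}

/-- The adjacency matrix `A̅_i` of `R_i`, with entries in `𝔽`. -/
noncomputable def adj (S : AssocScheme X d) (𝔽 : Type*) [Field 𝔽] (i : Fin (d + 1)) :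
    Matrix X X 𝔽 :=
  Matrix.of fun x y => if (x, y) ∈ S.r i then 1 else 0

/-- `v` spans a trivial `𝔽S`-submodule of the regular `𝔽S`-module:
`v` is a nonzero element of `𝔽S` with `A̅_i v = k̅_i v` for all `i`. -/
def IsTrivialVector (S : AssocScheme X d) (𝔽 : Type*) [Field 𝔽] (v : Matrix X X 𝔽) : Prop :=
  v ≠ 0 ∧ v ∈ Submodule.span 𝔽 (Set.range (S.adj 𝔽)) ∧
    ∀ i : Fin (d + 1), S.adj 𝔽 i * v = (S.val i : 𝔽) • v

/-- `S` is `p`-transitive over `𝔽` (of characteristic `p`) if the regular `𝔽S`-module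
contains a unique trivial `𝔽S`-submodule. -/
def IsPTransitive (S : AssocScheme X d) (𝔽 : Type*) [Field 𝔽] : Prop :=
  ∃! W : Submodule 𝔽 (Matrix X X 𝔽),
    ∃ v : Matrix X X 𝔽, S.IsTrivialVector 𝔽 v ∧ W = Submodule.span 𝔽 {v}

/-- A subset `T ⊆ S` is singular if `O_ϑ(S) ⊆ T` and
`R_x R_{y*} R_y R_z ⊆ T` for all `R_x ∈ O_ϑ(S)`, `R_y ∈ S`, `R_z ∈ T`. -/
def IsSingular (S : AssocScheme X d) (T : Set (Fin (d + 1))) : Prop :=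
  S.thinRadical ⊆ T ∧ ∀ x ∈ S.thinRadical, ∀ y : Fin (d + 1), ∀ z ∈ T,
    S.cmul (S.cmul (S.cmul {x} {S.star y}) {y}) {z} ⊆ T

/-- `S_{p'} = {R_i ∈ S : p ∤ k_i}`. -/
def pPrimePart (S : AssocScheme X d) (p : ℕ) : Set (Fin (d + 1)) :=
  {i | ¬ p ∣ S.val i}

end AssocScheme


/-! ### Auxiliary development -/

namespace AssocScheme

section Aux

variable {X : Type*} [Fintype X] [Nonempty X] {d : ℕ} (S : AssocScheme X d)

/-- The unique relation containing a pair. -/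
noncomputable def relOf (q : X × X) : Fin (d + 1) :=
  (S.existsUnique_rel q).exists.choose

lemma mem_relOf (q : X × X) : q ∈ S.r (S.relOf q) :=
  (S.existsUnique_rel q).exists.choose_spec

lemma relOf_eq {q : X × X} {i : Fin (d + 1)} (h : q ∈ S.r i) : S.relOf q = i :=
  (S.existsUnique_rel q).unique (S.mem_relOf q) h

lemma diag_mem_r_zero (x : X) : ((x, x) : X × X) ∈ S.r 0 := by
  rw [S.r_zero]; exact rfl

lemma relOf_diag (x : X) : S.relOf (x, x) = 0 :=
  S.relOf_eq (S.diag_mem_r_zero x)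

lemma mem_r_star {i : Fin (d + 1)} {x y : X} :
    (x, y) ∈ S.r (S.star i) ↔ (y, x) ∈ S.r i :=
  S.mem_star i (x, y)

lemma star_star (i : Fin (d + 1)) : S.star (S.star i) = i := by
  obtain ⟨⟨a, b⟩, hq⟩ := S.r_nonempty i
  have h1 : ((a, b) : X × X) ∈ S.r (S.star (S.star i)) := by
    rw [S.mem_r_star, S.mem_r_star]; exact hq
  exact (S.existsUnique_rel (a, b)).unique h1 hq

lemma pNum_pos_of_witness {u v : Fin (d + 1)} {x y z : X}
    (hxz : (x, z) ∈ S.r u) (hzy : (z, y) ∈ S.r v) :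
    0 < S.pNum u v (S.relOf (x, y)) := by
  rw [← S.ncard_eq u v _ (x, y) (S.mem_relOf _)]
  exact (Set.ncard_pos (Set.toFinite _)).mpr ⟨z, hxz, hzy⟩

lemma relOf_mem_cmul {u v : Fin (d + 1)} {x y z : X}
    (hxz : (x, z) ∈ S.r u) (hzy : (z, y) ∈ S.r v) :
    S.relOf (x, y) ∈ S.cmul {u} {v} :=
  ⟨u, rfl, v, rfl, S.pNum_pos_of_witness hxz hzy⟩

lemma exists_witness {u v k : Fin (d + 1)} (hp : 0 < S.pNum u v k)
    {x y : X} (hxy : (x, y) ∈ S.r k) :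
    ∃ z, (x, z) ∈ S.r u ∧ (z, y) ∈ S.r v := by
  have h := S.ncard_eq u v k (x, y) hxy
  have h2 : 0 < ({z : X | (x, z) ∈ S.r u ∧ (z, y) ∈ S.r v}).ncard := h ▸ hp
  obtain ⟨z, hz⟩ := ((Set.ncard_pos (Set.toFinite _)).mp h2)
  exact ⟨z, hz⟩

open Finset in
lemma card_sphere (i : Fin (d + 1)) (x : X) :
    (Finset.univ.filter fun z => (x, z) ∈ S.r i).card = S.val i := by
  have h := S.ncard_eq i (S.star i) 0 (x, x) (S.diag_mem_r_zero x)
  have hset : {z : X | (x, z) ∈ S.r i ∧ (z, x) ∈ S.r (S.star i)}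
      = ↑(Finset.univ.filter fun z => (x, z) ∈ S.r i) := by
    ext z; simp [S.mem_r_star]
  rw [hset, Set.ncard_coe_finset] at h
  exact h

lemma val_pos (i : Fin (d + 1)) : 0 < S.val i := by
  obtain ⟨⟨a, b⟩, hab⟩ := S.r_nonempty i
  rw [← S.card_sphere i a]
  exact Finset.card_pos.mpr ⟨b, Finset.mem_filter.mpr ⟨Finset.mem_univ b, hab⟩⟩

open Finset in
lemma val_star (i : Fin (d + 1)) : S.val (S.star i) = S.val i := by
  have key : Fintype.card X * S.val i = Fintype.card X * S.val (S.star i) := by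
    calc Fintype.card X * S.val i
        = ∑ x : X, (Finset.univ.filter fun z => (x, z) ∈ S.r i).card := by
          simp [S.card_sphere, Finset.sum_const, mul_comm]
      _ = ∑ x : X, ∑ y : X, (if (x, y) ∈ S.r i then 1 else 0) := by
          refine Finset.sum_congr rfl fun x _ => ?_
          exact Finset.card_filter _ _
      _ = ∑ y : X, ∑ x : X, (if (x, y) ∈ S.r i then 1 else 0) := Finset.sum_comm
      _ = ∑ y : X, (Finset.univ.filter fun z => (y, z) ∈ S.r (S.star i)).card := by
          refine Finset.sum_congr rfl fun y _ => ?_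
          rw [Finset.card_filter]
          refine Finset.sum_congr rfl fun x _ => ?_
          simp [S.mem_r_star]
      _ = Fintype.card X * S.val (S.star i) := by
          simp [S.card_sphere, Finset.sum_const, mul_comm]
  exact (Nat.eq_of_mul_eq_mul_left Fintype.card_pos key).symm

lemma relOf_swap (a b : X) : S.relOf (b, a) = S.star (S.relOf (a, b)) :=
  S.relOf_eq (S.mem_r_star.mpr (S.mem_relOf (a, b)))

/-! ### Closed subsets -/

lemma zero_mem_of_closed {T : Set (Fin (d + 1))} (hT : S.IsClosedSubset T) : (0 : Fin (d + 1)) ∈ T := by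
  obtain ⟨⟨t, ht⟩, hmul⟩ := hT
  obtain ⟨⟨a, b⟩, hab⟩ := S.r_nonempty t
  have hba : ((b, a) : X × X) ∈ S.r (S.star t) := S.mem_r_star.mpr hab
  have hpos : 0 < S.pNum (S.star t) t 0 := by
    have := S.pNum_pos_of_witness hba hab
    rwa [S.relOf_diag] at this
  exact hmul ⟨S.star t, ⟨t, ht, rfl⟩, t, ht, hpos⟩

lemma pNum_zero_self_pos (u : Fin (d + 1)) : 0 < S.pNum u 0 u := by
  obtain ⟨⟨a, b⟩, hab⟩ := S.r_nonempty u
  have := S.pNum_pos_of_witness hab (S.diag_mem_r_zero b)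
  rwa [S.relOf_eq hab] at this

lemma star_mem_of_closed {T : Set (Fin (d + 1))} (hT : S.IsClosedSubset T)
    {t : Fin (d + 1)} (ht : t ∈ T) : S.star t ∈ T :=
  hT.2 ⟨S.star t, ⟨t, ht, rfl⟩, 0, S.zero_mem_of_closed hT, S.pNum_zero_self_pos _⟩

lemma cmul_subset_of_closed {T : Set (Fin (d + 1))} (hT : S.IsClosedSubset T)
    {u v : Fin (d + 1)} (hu : u ∈ T) (hv : v ∈ T) : S.cmul {u} {v} ⊆ T := by
  intro k hk
  obtain ⟨u', hu', v', hv', hp⟩ := hk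
  rcases hu' with rfl
  rcases hv' with rfl
  refine hT.2 ⟨u', ⟨S.star u', S.star_mem_of_closed hT hu, S.star_star u'⟩, v', hv, hp⟩

lemma univ_isClosed : S.IsClosedSubset Set.univ :=
  ⟨⟨0, trivial⟩, fun _ _ => trivial⟩

lemma subset_closure (H : Set (Fin (d + 1))) : H ⊆ S.closure H := by
  intro h hh
  exact fun T hT => hT.2 hh

lemma closure_subset {H T : Set (Fin (d + 1))} (hT : S.IsClosedSubset T) (hHT : H ⊆ T) :
    S.closure H ⊆ T :=
  Set.sInter_subset_of_mem ⟨hT, hHT⟩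

lemma closure_isClosed (H : Set (Fin (d + 1))) : S.IsClosedSubset (S.closure H) := by
  constructor
  · exact ⟨0, fun T hT => S.zero_mem_of_closed hT.1⟩
  · intro k hk
    obtain ⟨u', hu', v, hv, hp⟩ := hk
    obtain ⟨u, hu, rfl⟩ := hu'
    intro T hT
    exact hT.1.2 ⟨S.star u, ⟨u, hu T hT, rfl⟩, v, hv T hT, hp⟩

/-! ### Thin residue -/

lemma star_cmul_self_subset_thinResidue (j : Fin (d + 1)) :
    S.cmul {S.star j} {j} ⊆ S.thinResidue := by
  intro k hk
  intro N hN
  obtain ⟨hNc, hNsn⟩ := hN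
  obtain ⟨u, hu, v, hv, hp⟩ := hk
  simp only [Set.mem_singleton_iff] at hu hv
  rw [hu, hv] at hp
  refine hNsn j ⟨S.star j, ?_, j, rfl, hp⟩
  exact ⟨S.star j, rfl, 0, S.zero_mem_of_closed hNc, S.pNum_zero_self_pos _⟩

/-- Under the thin-thin-residue hypothesis, any two points in a sphere `xR_j` are
related by a thin relation. -/
lemma sphere_rel_thin (httr : S.thinResidue ⊆ S.thinRadical)
    {j : Fin (d + 1)} {x z z' : X} (hz : (x, z) ∈ S.r j) (hz' : (x, z') ∈ S.r j) :
    S.val (S.relOf (z, z')) = 1 := by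
  have hzx : ((z, x) : X × X) ∈ S.r (S.star j) := S.mem_r_star.mpr hz
  have := S.relOf_mem_cmul hzx hz'
  exact httr (S.star_cmul_self_subset_thinResidue j this)

/-! ### Pointwise analysis of trivial vectors -/

variable (𝔽 : Type*) [Field 𝔽]

open Finset in
lemma sum_sphere_const (j : Fin (d + 1)) (x : X) (g : X → 𝔽) (γ : 𝔽)
    (hg : ∀ z, (x, z) ∈ S.r j → g z = γ) :
    (∑ z : X, if (x, z) ∈ S.r j then g z else 0) = (S.val j : 𝔽) * γ := by
  classical
  rw [← Finset.sum_filter]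
  rw [Finset.sum_congr rfl (fun z hz => hg z (by simpa using (Finset.mem_filter.mp hz).2))]
  rw [Finset.sum_const, S.card_sphere, nsmul_eq_mul]

lemma pointwise_of_eigen {v : Matrix X X 𝔽} {j : Fin (d + 1)}
    (h : S.adj 𝔽 j * v = (S.val j : 𝔽) • v) (x y : X) :
    (∑ z : X, if (x, z) ∈ S.r j then v z y else 0) = (S.val j : 𝔽) * v x y := by
  have h2 := congrFun (congrFun h x) y
  rw [Matrix.mul_apply, Matrix.smul_apply, smul_eq_mul] at h2
  rw [← h2]
  refine Finset.sum_congr rfl fun z _ => ?_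
  simp [adj, ite_mul]

lemma eigen_of_pointwise {v : Matrix X X 𝔽} {j : Fin (d + 1)}
    (h : ∀ x y : X, (∑ z : X, if (x, z) ∈ S.r j then v z y else 0) = (S.val j : 𝔽) * v x y) :
    S.adj 𝔽 j * v = (S.val j : 𝔽) • v := by
  ext x y
  rw [Matrix.mul_apply, Matrix.smul_apply, smul_eq_mul, ← h x y]
  refine Finset.sum_congr rfl fun z _ => ?_
  simp [adj, ite_mul]

/-- A trivial vector is constant on each relation. -/
lemma triv_rel_const {v : Matrix X X 𝔽} (hv : S.IsTrivialVector 𝔽 v)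
    {a b a' b' : X} (h : S.relOf (a, b) = S.relOf (a', b')) : v a b = v a' b' := by
  obtain ⟨c, hc⟩ := (Submodule.mem_span_range_iff_exists_fun 𝔽).mp hv.2.1
  have entry : ∀ u w : X, v u w = c (S.relOf (u, w)) := by
    intro u w
    rw [← hc]
    have : ∀ x : Fin (d + 1), x ∈ Finset.univ → x ≠ S.relOf (u, w) →
        (c x • S.adj 𝔽 x) u w = 0 := by
      intro i _ hne
      simp only [Matrix.smul_apply, adj, Matrix.of_apply, smul_eq_mul]
      rw [if_neg, mul_zero]
      intro hmem
      exact hne (S.relOf_eq hmem).symm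
    rw [show (∑ i : Fin (d + 1), c i • S.adj 𝔽 i) u w
        = ∑ i : Fin (d + 1), (c i • S.adj 𝔽 i) u w from Matrix.sum_apply u w _ _]
    rw [Finset.sum_eq_single (S.relOf (u, w)) this (by simp)]
    simp [adj, S.mem_relOf (u, w)]
  rw [entry, entry, h]

/-- Thin step: if `rel(a,b)` is thin then `v b y = v a y` for all `y`. -/
lemma step_thin {v : Matrix X X 𝔽} (hv : S.IsTrivialVector 𝔽 v)
    {a b : X} (h1 : S.val (S.relOf (a, b)) = 1) (y : X) : v b y = v a y := by
  set m := S.relOf (a, b) with hm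
  have hE := S.pointwise_of_eigen 𝔽 (hv.2.2 m) a y
  have hcard : (Finset.univ.filter fun z => (a, z) ∈ S.r m).card = 1 := by
    rw [S.card_sphere]; exact h1
  have hbmem : b ∈ Finset.univ.filter fun z => (a, z) ∈ S.r m := by
    simp [S.mem_relOf (a, b)]; exact S.mem_relOf (a, b)
  have hsingle : (Finset.univ.filter fun z => (a, z) ∈ S.r m) = {b} := by
    obtain ⟨w, hw⟩ := Finset.card_eq_one.mp hcard
    rw [hw] at hbmem ⊢
    rw [Finset.mem_singleton] at hbmem
    rw [hbmem]
  rw [← Finset.sum_filter, hsingle, Finset.sum_singleton, h1] at hE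
  simpa using hE

/-- `p'`-step: if `p ∤ k_{rel(a,b)}` then `v b y = v a y` for all `y`. -/
lemma step_pprime (p : ℕ) [Fact p.Prime] [CharP 𝔽 p]
    (httr : S.thinResidue ⊆ S.thinRadical)
    {v : Matrix X X 𝔽} (hv : S.IsTrivialVector 𝔽 v)
    {a b : X} (hj : ¬ p ∣ S.val (S.relOf (a, b))) (y : X) : v b y = v a y := by
  set j := S.relOf (a, b) with hjdef
  have hab : ((a, b) : X × X) ∈ S.r j := S.mem_relOf (a, b)
  have hconst : ∀ z, (a, z) ∈ S.r j → v z y = v b y := by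
    intro z hz
    exact S.step_thin 𝔽 hv (S.sphere_rel_thin httr hab hz) y
  have hE := S.pointwise_of_eigen 𝔽 (hv.2.2 j) a y
  rw [S.sum_sphere_const 𝔽 j a (fun z => v z y) (v b y) hconst] at hE
  have hne : (S.val j : 𝔽) ≠ 0 := by
    rw [Ne, CharP.cast_eq_zero_iff 𝔽 p]
    exact hj
  exact mul_left_cancel₀ hne hE

end Aux

end AssocScheme

/-- **Theorem B.** A scheme with thin thin residue is `p`-transitive iff `S = ⟨S_{p'}⟩`. -/
theorem thinThinResidue_isPTransitive_iff
    {X : Type*} [Fintype X] [Nonempty X] {d : ℕ} (S : AssocScheme X d)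
    (𝔽 : Type*) [Field 𝔽] (p : ℕ) [Fact p.Prime] [CharP 𝔽 p]
    (httr : S.thinResidue ⊆ S.thinRadical) :
    S.IsPTransitive 𝔽 ↔ S.closure (S.pPrimePart p) = Set.univ := by
  classical
  obtain ⟨x0⟩ := (inferInstance : Nonempty X)
  -- the all-ones matrix
  set J : Matrix X X 𝔽 := Matrix.of (fun _ _ => (1 : 𝔽)) with hJdef
  have hJentry : ∀ a b : X, J a b = 1 := fun a b => rfl
  have hJsum : J = ∑ i : Fin (d + 1), S.adj 𝔽 i := by
    ext a b
    rw [Matrix.sum_apply]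
    rw [Finset.sum_eq_single (S.relOf (a, b))]
    · simp [AssocScheme.adj, S.mem_relOf (a, b), hJentry]
    · intro i _ hne
      have hmem : ((a, b) : X × X) ∉ S.r i := fun hmem => hne (S.relOf_eq hmem).symm
      simp [AssocScheme.adj, hmem]
    · simp
  have hJtriv : S.IsTrivialVector 𝔽 J := by
    refine ⟨?_, ?_, ?_⟩
    · intro h
      have := congrFun (congrFun h x0) x0
      simp [hJentry] at this
    · rw [hJsum]
      exact Submodule.sum_mem _ fun i _ => Submodule.subset_span ⟨i, rfl⟩
    · intro j
      apply S.eigen_of_pointwise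
      intro x y
      rw [S.sum_sphere_const 𝔽 j x (fun z => J z y) 1 (fun z _ => hJentry z y)]
      simp [hJentry]
  -- thin relations are p'-valenced
  have hthinp : S.thinRadical ⊆ S.pPrimePart p := by
    intro i hi
    have h1 : S.val i = 1 := hi
    intro hdvd
    rw [h1, Nat.dvd_one] at hdvd
    exact (Fact.out : p.Prime).ne_one hdvd
  constructor
  · -- p-transitive → closure = univ
    intro hPT
    by_contra hne
    obtain ⟨k0, hk0⟩ := (Set.ne_univ_iff_exists_notMem _).mp hne
    set T : Set (Fin (d + 1)) := S.closure (S.pPrimePart p) with hTdef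
    have hTcl : S.IsClosedSubset T := S.closure_isClosed _
    have hino : S.pPrimePart p ⊆ T := S.subset_closure _
    have hiff : ∀ m ∈ T, ∀ z z' y : X, (z, z') ∈ S.r m →
        (S.relOf (z, y) ∈ T ↔ S.relOf (z', y) ∈ T) := by
      intro m hm z z' y hzz'
      constructor
      · intro h
        exact S.cmul_subset_of_closed hTcl (S.star_mem_of_closed hTcl hm) h
          (S.relOf_mem_cmul (S.mem_r_star.mpr hzz') (S.mem_relOf (z, y)))
      · intro h
        exact S.cmul_subset_of_closed hTcl hm h
          (S.relOf_mem_cmul hzz' (S.mem_relOf (z', y)))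
    set v2 : Matrix X X 𝔽 := ∑ i : Fin (d + 1), (if i ∈ T then (1 : 𝔽) else 0) • S.adj 𝔽 i
      with hv2def
    have hv2entry : ∀ a b : X, v2 a b = if S.relOf (a, b) ∈ T then 1 else 0 := by
      intro a b
      rw [hv2def, Matrix.sum_apply]
      rw [Finset.sum_eq_single (S.relOf (a, b))]
      · simp [AssocScheme.adj, S.mem_relOf (a, b)]
      · intro i _ hne
        have hmem : ((a, b) : X × X) ∉ S.r i := fun hmem => hne (S.relOf_eq hmem).symm
        simp [AssocScheme.adj, hmem]
      · simp
    have hv2triv : S.IsTrivialVector 𝔽 v2 := by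
      refine ⟨?_, ?_, ?_⟩
      · intro h
        have := congrFun (congrFun h x0) x0
        rw [hv2entry, S.relOf_diag, if_pos (S.zero_mem_of_closed hTcl)] at this
        simp at this
      · exact Submodule.sum_mem _ fun i _ =>
          Submodule.smul_mem _ _ (Submodule.subset_span ⟨i, rfl⟩)
      · intro j
        apply S.eigen_of_pointwise
        intro x y
        by_cases hj : (S.val j : 𝔽) = 0
        · obtain ⟨z0, hz0⟩ : ∃ z0, (x, z0) ∈ S.r j := by
            have hp := S.val_pos j
            rw [← S.card_sphere j x] at hp
            obtain ⟨z0, hz0⟩ := Finset.card_pos.mp hp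
            exact ⟨z0, (Finset.mem_filter.mp hz0).2⟩
          rw [S.sum_sphere_const 𝔽 j x (fun z => v2 z y) (v2 z0 y) ?_, hj, zero_mul,
            zero_mul]
          intro z hz
          show v2 z y = v2 z0 y
          have hmthin : S.val (S.relOf (z, z0)) = 1 := S.sphere_rel_thin httr hz hz0
          have hmT : S.relOf (z, z0) ∈ T := hino (hthinp hmthin)
          rw [hv2entry z y, hv2entry z0 y]
          exact if_congr (hiff _ hmT z z0 y (S.mem_relOf _)) rfl rfl
        · have hjT : j ∈ T := by
            apply hino
            rw [CharP.cast_eq_zero_iff 𝔽 p] at hj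
            exact hj
          rw [S.sum_sphere_const 𝔽 j x (fun z => v2 z y) (v2 x y) ?_]
          intro z hz
          show v2 z y = v2 x y
          rw [hv2entry z y, hv2entry x y]
          exact if_congr (hiff j hjT x z y hz).symm rfl rfl
    have heq : Submodule.span 𝔽 {J} = Submodule.span 𝔽 {v2} :=
      hPT.unique ⟨J, hJtriv, rfl⟩ ⟨v2, hv2triv, rfl⟩
    have hv2mem : v2 ∈ Submodule.span 𝔽 {J} := by
      rw [heq]; exact Submodule.mem_span_singleton_self v2
    obtain ⟨a, ha⟩ := Submodule.mem_span_singleton.mp hv2mem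
    obtain ⟨⟨x1, y1⟩, hxy1⟩ := S.r_nonempty k0
    have e1 : a = 1 := by
      have := congrFun (congrFun ha x0) x0
      rw [hv2entry, S.relOf_diag, if_pos (S.zero_mem_of_closed hTcl)] at this
      simpa [hJentry] using this
    have e2 : a = 0 := by
      have := congrFun (congrFun ha x1) y1
      rw [hv2entry, S.relOf_eq hxy1, if_neg hk0] at this
      simpa [hJentry] using this
    rw [e1] at e2
    exact one_ne_zero e2
  · -- closure = univ → p-transitive
    intro hcl
    set e : X → X → Prop := fun u w => ¬ p ∣ S.val (S.relOf (u, w)) with hedef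
    have hesymm : Symmetric e := by
      intro a b h
      show ¬ p ∣ S.val (S.relOf (b, a))
      rw [S.relOf_swap a b, S.val_star]
      exact h
    have hRsymm : Symmetric (Relation.ReflTransGen e) :=
      by haveI : Std.Symm e := ⟨fun a b h => hesymm h⟩; exact fun a b h => (Relation.ReflTransGen.stdSymm (r := e)).symm a b h
    set Wset : Set (Fin (d + 1)) :=
      {k | ∀ q : X × X, q ∈ S.r k → Relation.ReflTransGen e q.1 q.2} with hWdef
    have hWclosed : S.IsClosedSubset Wset := by
      constructor
      · refine ⟨0, fun q hq => ?_⟩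
        rw [S.r_zero] at hq
        have : q.1 = q.2 := hq
        rw [this]
      · intro k hk
        obtain ⟨u', hu'', v, hv, hp⟩ := hk
        obtain ⟨u, hu, rfl⟩ := hu''
        intro q hq
        obtain ⟨z, hz1, hz2⟩ := S.exists_witness hp (show (q.1, q.2) ∈ S.r k from hq)
        have h1 : Relation.ReflTransGen e z q.1 := hu (z, q.1) (S.mem_r_star.mp hz1)
        have h2 : Relation.ReflTransGen e z q.2 := hv (z, q.2) hz2
        exact (hRsymm h1).trans h2
    have hsubW : S.pPrimePart p ⊆ Wset := by
      intro k hk q hq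
      refine Relation.ReflTransGen.single ?_
      show ¬ p ∣ S.val (S.relOf (q.1, q.2))
      rw [S.relOf_eq (show (q.1, q.2) ∈ S.r k from hq)]
      exact hk
    have hWuniv : ∀ a b : X, Relation.ReflTransGen e a b := by
      intro a b
      have : S.relOf (a, b) ∈ Wset := by
        have h1 : (Set.univ : Set (Fin (d + 1))) ⊆ Wset := by
          rw [← hcl]
          exact S.closure_subset hWclosed hsubW
        exact h1 (Set.mem_univ _)
      exact this (a, b) (S.mem_relOf (a, b))
    refine ⟨Submodule.span 𝔽 {J}, ⟨J, hJtriv, rfl⟩, ?_⟩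
    rintro W ⟨v, hvt, rfl⟩
    have hstep : ∀ y a b : X, Relation.ReflTransGen e a b → v a y = v b y := by
      intro y a b h
      induction h with
      | refl => rfl
      | tail _ hbc ih =>
        rw [ih]
        exact (S.step_pprime 𝔽 p httr hvt hbc y).symm
    have hconst : ∀ a b : X, v a b = v x0 x0 := by
      intro a b
      have h1 : v a b = v b b := hstep b a b (hWuniv a b)
      have h2 : v b b = v x0 x0 :=
        S.triv_rel_const 𝔽 hvt (by rw [S.relOf_diag, S.relOf_diag])
      rw [h1, h2]
    have hvJ : v = v x0 x0 • J := by
      ext a b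
      rw [Matrix.smul_apply, hJentry, smul_eq_mul, mul_one]
      exact hconst a b
    have hγ : v x0 x0 ≠ 0 := by
      intro h
      apply hvt.1
      rw [hvJ, h, zero_smul]
    rw [hvJ]
    exact Submodule.span_singleton_smul_eq (IsUnit.mk0 _ hγ) J
end

section
/- If T is a singular subset of an association scheme S, then the thin residue O^ϑ(S) is contained in T. -/
open scoped Classical

namespace AssocScheme

variable {X : Type*} [Fintype X] [Nonempty X] {d : ℕ}

section Aux

variable {X : Type*} [Fintype X] [Nonempty X] {d : ℕ} (S : AssocScheme X d)

lemma rel_exists (q : X × X) : ∃ i, q ∈ S.r i := (S.existsUnique_rel q).exists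

lemma rel_unique {q : X × X} {i j : Fin (d + 1)} (hi : q ∈ S.r i) (hj : q ∈ S.r j) : i = j :=
  ((S.existsUnique_rel q).unique hi hj)

lemma pos_of_wit {u v k : Fin (d + 1)} {x y z : X}
    (hk : (x, y) ∈ S.r k) (hu : (x, z) ∈ S.r u) (hv : (z, y) ∈ S.r v) :
    0 < S.pNum u v k := by
  rw [← S.ncard_eq u v k (x, y) hk]
  exact (Set.ncard_pos (Set.toFinite _)).mpr ⟨z, hu, hv⟩

lemma exists_wit {u v k : Fin (d + 1)} (hpos : 0 < S.pNum u v k) {x y : X}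
    (hxy : (x, y) ∈ S.r k) : ∃ z, (x, z) ∈ S.r u ∧ (z, y) ∈ S.r v := by
  have h := S.ncard_eq u v k (x, y) hxy
  have hne : ({z : X | (x, z) ∈ S.r u ∧ (z, y) ∈ S.r v}).Nonempty :=
    Set.nonempty_of_ncard_ne_zero (by rw [h]; omega)
  exact hne

lemma transfer {u v k : Fin (d + 1)} {x y x' y' z : X}
    (hk : (x, y) ∈ S.r k) (hu : (x, z) ∈ S.r u) (hv : (z, y) ∈ S.r v)
    (hk' : (x', y') ∈ S.r k) :
    ∃ z', (x', z') ∈ S.r u ∧ (z', y') ∈ S.r v :=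
  S.exists_wit (S.pos_of_wit hk hu hv) hk'

lemma diag_mem (x : X) : (x, x) ∈ S.r 0 := by simp [S.r_zero]

lemma total (x : X) (i : Fin (d + 1)) : ∃ z, (x, z) ∈ S.r i := by
  obtain ⟨⟨a, b⟩, hab⟩ := S.r_nonempty i
  have hba : (b, a) ∈ S.r (S.star i) := (S.mem_star i (b, a)).mpr hab
  obtain ⟨z, hz, _⟩ := S.transfer (S.diag_mem a) hab hba (S.diag_mem x)
  exact ⟨z, hz⟩

/-- Two points related by sharing a common predecessor via the same relation. -/
def Grel : X → X → Prop := fun x y => ∃ i c, (c, x) ∈ S.r i ∧ (c, y) ∈ S.r i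

/-- Transitive closure of `Grel`. -/
def Prel : X → X → Prop := Relation.TransGen S.Grel

lemma grel_refl (x : X) : S.Grel x x := ⟨0, x, S.diag_mem x, S.diag_mem x⟩

lemma grel_symm {x y : X} : S.Grel x y → S.Grel y x := fun ⟨i, c, h1, h2⟩ => ⟨i, c, h2, h1⟩

lemma prel_symm {x y : X} (h : S.Prel x y) : S.Prel y x := by
  induction h with
  | single h => exact .single (S.grel_symm h)
  | tail _ hG ih => exact (Relation.TransGen.single (S.grel_symm hG)).trans ih

lemma core {a b x y : X} {i : Fin (d + 1)} (hG : S.Grel a b)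
    (hax : (a, x) ∈ S.r i) (hby : (b, y) ∈ S.r i) : S.Prel x y := by
  obtain ⟨j, c, hca, hcb⟩ := hG
  obtain ⟨u, hcx⟩ := S.rel_exists (c, x)
  have hxa : (x, a) ∈ S.r (S.star i) := (S.mem_star i (x, a)).mpr hax
  obtain ⟨z, hcz, hzb⟩ := S.transfer hca hcx hxa hcb
  have hbz : (b, z) ∈ S.r i := (S.mem_star i (z, b)).mp hzb
  exact (Relation.TransGen.single ⟨u, c, hcx, hcz⟩).tail ⟨i, b, hbz, hby⟩

lemma conj {a b x y : X} {i : Fin (d + 1)} (hP : S.Prel a b)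
    (hax : (a, x) ∈ S.r i) (hby : (b, y) ∈ S.r i) : S.Prel x y := by
  induction hP generalizing y with
  | single h => exact S.core h hax hby
  | tail _ hG ih =>
    obtain ⟨y', hy'⟩ := S.total _ i
    exact (ih hy').trans (S.core hG hy' hby)

/-- The set of indices whose relation is contained in `Prel`. -/
def Wset : Set (Fin (d + 1)) := {k | ∀ q ∈ S.r k, S.Prel q.1 q.2}

lemma zero_mem_Wset : 0 ∈ S.Wset := by
  rintro ⟨x, y⟩ hq
  have hxy : x = y := by rw [S.r_zero] at hq; exact hq
  subst hxy
  exact Relation.TransGen.single (S.grel_refl x)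

lemma Wset_stronglyNormal : S.IsStronglyNormal S.Wset := by
  constructor
  · refine ⟨⟨0, S.zero_mem_Wset⟩, ?_⟩
    rintro k ⟨u', hu', v, hv, hpos⟩ ⟨x, y⟩ hxy
    obtain ⟨u, hu, rfl⟩ := hu'
    obtain ⟨z, hz1, hz2⟩ := S.exists_wit hpos hxy
    have hzx : (z, x) ∈ S.r u := (S.mem_star u (x, z)).mp hz1
    exact (S.prel_symm (hu (z, x) hzx)).trans (hv (z, y) hz2)
  · rintro i k ⟨l, ⟨s, hs, w, hw, hpos1⟩, v, hv, hpos2⟩ ⟨x, y⟩ hxy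
    rw [Set.mem_singleton_iff] at hs hv
    subst hs
    rw [hv] at hpos2
    obtain ⟨b, hxb, hby⟩ := S.exists_wit hpos2 hxy
    obtain ⟨a, hxa, hab⟩ := S.exists_wit hpos1 hxb
    have hax : (a, x) ∈ S.r i := (S.mem_star i (x, a)).mp hxa
    exact S.conj (hw (a, b) hab) hax hby

lemma zero_mem_thinRadical : (0 : Fin (d + 1)) ∈ S.thinRadical := by
  obtain ⟨x⟩ := (inferInstance : Nonempty X)
  have hstar : S.star 0 = 0 :=
    S.rel_unique ((S.mem_star 0 (x, x)).mpr (S.diag_mem x)) (S.diag_mem x)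
  show S.val 0 = 1
  unfold val
  rw [hstar, ← S.ncard_eq 0 0 0 (x, x) (S.diag_mem x)]
  have hset : {z : X | (x, z) ∈ S.r 0 ∧ (z, x) ∈ S.r 0} = {x} := by
    ext z
    simp only [S.r_zero, Set.mem_setOf_eq, Set.mem_singleton_iff]
    constructor
    · rintro ⟨h, _⟩; exact h.symm
    · rintro rfl; exact ⟨rfl, rfl⟩
  rw [hset, Set.ncard_singleton]

lemma prel_mem_of_isSingular {T : Set (Fin (d + 1))} (hT : S.IsSingular T) {x y : X}
    (hP : S.Prel x y) : ∀ k, (x, y) ∈ S.r k → k ∈ T := by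
  have h0 : (0 : Fin (d + 1)) ∈ T := hT.1 S.zero_mem_thinRadical
  induction hP using Relation.TransGen.head_induction_on with
  | single h =>
    intro k hk
    obtain ⟨i, c, hca, hcy⟩ := h
    have hac : (_, c) ∈ S.r (S.star i) := (S.mem_star i _).mpr hca
    exact hT.2 0 S.zero_mem_thinRadical i 0 h0
      ⟨k, ⟨S.star i, ⟨0, rfl, S.star i, rfl, S.pos_of_wit hac (S.diag_mem _) hac⟩,
        i, rfl, S.pos_of_wit hk hac hcy⟩, 0, rfl, S.pos_of_wit hk hk (S.diag_mem _)⟩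
  | head hG _ ih =>
    intro k hk
    obtain ⟨i, c, hca, hcc'⟩ := hG
    obtain ⟨l, hl⟩ := S.rel_exists (_, y)
    obtain ⟨u, hu⟩ := S.rel_exists (_, _)
    have hac : (_, c) ∈ S.r (S.star i) := (S.mem_star i _).mpr hca
    exact hT.2 0 S.zero_mem_thinRadical i l (ih l hl)
      ⟨u, ⟨S.star i, ⟨0, rfl, S.star i, rfl, S.pos_of_wit hac (S.diag_mem _) hac⟩,
        i, rfl, S.pos_of_wit hu hac hcc'⟩, l, rfl, S.pos_of_wit hk hu hl⟩

end Aux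

end AssocScheme

/-- If `T` is a singular subset of `S`, then `O^ϑ(S) ⊆ T`. -/
theorem thinResidue_subset_of_isSingular
    {X : Type*} [Fintype X] [Nonempty X] {d : ℕ} (S : AssocScheme X d)
    (T : Set (Fin (d + 1))) (hT : S.IsSingular T) :
    S.thinResidue ⊆ T := by
  intro k hk
  have hkW : k ∈ S.Wset := Set.mem_sInter.mp hk S.Wset S.Wset_stronglyNormal
  obtain ⟨⟨x, y⟩, hxy⟩ := S.r_nonempty k
  exact S.prel_mem_of_isSingular hT (hkW (x, y) hxy) k hxy
end
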